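/- arXiv:1707.00472 — 2 statements merged into one kernel-verified Lean document; each statement's English description precedes it below -/
import Mathlib

section
/- Given reconciliation maps ψ_1,…,ψ_l for (P,H,φ) (l ≥ 1), the map ψ_med defined by letting ψ_med(v) be the unique vertex w ∈ A(v) with d_H(m(v),w) = zmed(d_H(m(v),ψ_1(v)),…,d_H(m(v),ψ_l(v))) is itself a reconciliation map for (P,H,φ). -/
open Classical

namespace Recon

/-- `Anc p u v` : `u` is above or equal to `v` (i.e. `u` is an ancestor of `v`)
with respect to the parent map `p` of a rooted tree. -/
def Anc {V : Type*} (p : V → V) (u v : V) : Prop := ∃ n : ℕ, p^[n] v = u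

/-- `u` is strictly above `v`. -/
def SAnc {V : Type*} (p : V → V) (u v : V) : Prop := Anc p u v ∧ u ≠ v

/-- The length of the (undirected) path between `u` and `v` in the tree with parent map `p`. -/
noncomputable def tdist {V : Type*} (p : V → V) (u v : V) : ℕ :=
  sInf {k : ℕ | ∃ n m : ℕ, n + m = k ∧ p^[n] u = p^[m] v}

/-- `p` is the parent map of a rooted tree on `V` with root `r` and depth function `dp`. -/
structure IsRootedTree {V : Type*} (p : V → V) (r : V) (dp : V → ℕ) : Prop where
  parent_root : p r = r
  depth_root : dp r = 0
  depth_parent : ∀ v, v ≠ r → dp v = dp (p v) + 1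

/-- `v` is a leaf: it has no children. -/
def IsLeaf {V : Type*} (p : V → V) (v : V) : Prop := ∀ u, p u = v → u = v

/-- `u` is a child of `v`. -/
def IsChild {V : Type*} (p : V → V) (u v : V) : Prop := p u = v ∧ u ≠ v

/-- every non-leaf vertex has exactly two children (binary tree). -/
def IsBinary {V : Type*} (p : V → V) : Prop :=
  ∀ v, ¬ IsLeaf p v →
    ∃ u w, u ≠ w ∧ IsChild p u v ∧ IsChild p w v ∧ ∀ z, IsChild p z v → z = u ∨ z = w

/-- `w` is a least common ancestor of the set `S`. -/
def IsLCA {V : Type*} (p : V → V) (S : Set V) (w : V) : Prop :=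
  (∀ s ∈ S, Anc p w s) ∧ ∀ w', (∀ s ∈ S, Anc p w' s) → Anc p w' w

/-- The set `A(v)`: all vertices on the path from the root `r` down to `mv`. -/
def ASet {V : Type*} (p : V → V) (r : V) (mv : V) : Set V :=
  {w | Anc p r w ∧ Anc p w mv}

/-- `ψ` is a reconciliation map for `(P,H,φ)`: it restricts to `φ` on the leaves of `P`,
and the image of a vertex is above or equal to the image of each of its children. -/
def IsRecon {VP VH : Type*} (pP : VP → VP) (pH : VH → VH) (φ ψ : VP → VH) : Prop :=
  (∀ x, IsLeaf pP x → ψ x = φ x) ∧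
  ∀ v v', IsChild pP v' v → Anc pH (ψ v) (ψ v')

/-- The path-distance between two maps `V(P) → V(H)`. -/
noncomputable def dpath {VP VH : Type*} [Fintype VP] (pH : VH → VH) (ψ ψ' : VP → VH) : ℕ :=
  ∑ v : VP, tdist pH (ψ v) (ψ' v)

/-- One edit (up or down) operation transforming `ψ` into `ψ'`. -/
def EditStep {VP VH : Type*} [DecidableEq VP] (pP : VP → VP) (pH : VH → VH) (rH : VH)
    (m : VP → VH) (ψ ψ' : VP → VH) : Prop :=
  ∃ w : VP,
    (ψ w ≠ rH ∧ ψ w ≠ ψ (pP w) ∧ ψ' = Function.update ψ w (pH (ψ w))) ∨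
    (¬ IsLeaf pP w ∧ SAnc pH (ψ w) (m w) ∧ (∀ v', IsChild pP v' w → ψ w ≠ ψ v') ∧
      ∃ c, IsChild pH c (ψ w) ∧ c ∈ ASet pH rH (m w) ∧ ψ' = Function.update ψ w c)

/-- The edit distance: the least number of up/down operations transforming `ψ` into `ψ'`. -/
noncomputable def editDist {VP VH : Type*} [DecidableEq VP] (pP : VP → VP) (pH : VH → VH)
    (rH : VH) (m : VP → VH) (ψ ψ' : VP → VH) : ℕ :=
  sInf {n : ℕ | ∃ f : ℕ → VP → VH, f 0 = ψ ∧ f n = ψ' ∧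
    ∀ i < n, EditStep pP pH rH m (f i) (f (i + 1))}

/-- The median of a multiset of reals. -/
noncomputable def med (A : Multiset ℝ) : ℝ :=
  if A.card % 2 = 1 then (A.sort (· ≤ ·)).getD (A.card / 2) 0
  else ((A.sort (· ≤ ·)).getD (A.card / 2 - 1) 0 + (A.sort (· ≤ ·)).getD (A.card / 2) 0) / 2

/-- The median of a multiset of integers, rounded to the nearest integer (halves up). -/
noncomputable def zmed (A : Multiset ℤ) : ℤ :=
  round (med (A.map (fun z => (z : ℝ))))


section TreeLemmas
variable {V : Type*} {p : V → V} {r : V} {dp : V → ℕ}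

lemma anc_refl (u : V) : Anc p u u := ⟨0, rfl⟩

lemma anc_trans {u v w : V} (h1 : Anc p u v) (h2 : Anc p v w) : Anc p u w := by
  obtain ⟨n, hn⟩ := h1; obtain ⟨m, hm⟩ := h2
  exact ⟨n + m, by rw [Function.iterate_add_apply, hm, hn]⟩

lemma dp_parent_le (h : IsRootedTree p r dp) (v : V) : dp (p v) ≤ dp v := by
  by_cases hv : v = r
  · subst hv; rw [h.parent_root]
  · rw [h.depth_parent v hv]; omega

lemma dp_iterate_le (h : IsRootedTree p r dp) (n : ℕ) (v : V) : dp (p^[n] v) ≤ dp v := by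
  induction n with
  | zero => rfl
  | succ k ih => rw [Function.iterate_succ_apply']; exact (dp_parent_le h _).trans ih

lemma dp_iterate_ge (h : IsRootedTree p r dp) (n : ℕ) (v : V) : dp v ≤ dp (p^[n] v) + n := by
  induction n with
  | zero => simp
  | succ k ih =>
    rw [Function.iterate_succ_apply']
    have := dp_parent_le h (p^[k] v)
    by_cases hv : p^[k] v = r
    · have h0 : dp (p^[k] v) = 0 := hv ▸ h.depth_root
      omega
    · have := h.depth_parent _ hv; omega

lemma anc_dp_le (h : IsRootedTree p r dp) {u v : V} (huv : Anc p u v) : dp u ≤ dp v := by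
  obtain ⟨n, rfl⟩ := huv; exact dp_iterate_le h n v

lemma iterate_depth_root (h : IsRootedTree p r dp) (v : V) : p^[dp v] v = r := by
  generalize hd : dp v = d
  induction d generalizing v with
  | zero =>
    by_contra hv
    have hvr : v ≠ r := by rintro rfl; exact hv rfl
    have := h.depth_parent v hvr; omega
  | succ k ih =>
    have hv : v ≠ r := by rintro rfl; rw [h.depth_root] at hd; omega
    have hpd : dp (p v) = k := by have := h.depth_parent v hv; omega
    rw [Function.iterate_succ_apply]; exact ih (p v) hpd

lemma anc_root (h : IsRootedTree p r dp) (v : V) : Anc p r v := ⟨dp v, iterate_depth_root h v⟩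

lemma anc_of_dp_le (h : IsRootedTree p r dp) {u v : V} (huv : Anc p u v) (hd : dp v ≤ dp u) :
    u = v := by
  obtain ⟨n, rfl⟩ := huv
  induction n generalizing v with
  | zero => rfl
  | succ k ih =>
    by_cases hv : v = r
    · subst hv
      rw [Function.iterate_fixed h.parent_root]
    · exfalso
      have h1 : dp (p^[k+1] v) ≤ dp (p v) := by
        rw [Function.iterate_succ_apply]; exact dp_iterate_le h k (p v)
      have := h.depth_parent v hv; omega

lemma anc_antisymm (h : IsRootedTree p r dp) {u v : V} (h1 : Anc p u v) (h2 : Anc p v u) :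
    u = v := anc_of_dp_le h h1 (anc_dp_le h h2)

lemma iterate_of_ge_depth (h : IsRootedTree p r dp) {n : ℕ} {v : V} (hn : dp v ≤ n) :
    p^[n] v = r := by
  have : n = (n - dp v) + dp v := by omega
  rw [this, Function.iterate_add_apply, iterate_depth_root h v,
    Function.iterate_fixed h.parent_root]

lemma dp_iterate_eq (h : IsRootedTree p r dp) {n : ℕ} {v : V} (hn : n ≤ dp v) :
    dp (p^[n] v) = dp v - n := by
  induction n with
  | zero => simp
  | succ k ih =>
    have hk : k ≤ dp v := by omega
    have hne : p^[k] v ≠ r := by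
      intro hr
      have : dp (p^[k] v) = 0 := hr ▸ h.depth_root
      omega
    rw [Function.iterate_succ_apply']
    have := h.depth_parent _ hne
    have := ih hk
    omega

/-- iterate to exact ancestor: if `Anc u v` then `p^[dp v - dp u] v = u`. -/
lemma anc_iterate_eq (h : IsRootedTree p r dp) {u v : V} (huv : Anc p u v) :
    p^[dp v - dp u] v = u := by
  obtain ⟨n, hn⟩ := huv
  by_cases hle : n ≤ dp v
  · have := dp_iterate_eq h hle
    rw [hn] at this
    have : dp v - dp u = n := by omega
    rw [this, hn]
  · have hr : u = r := by rw [← hn]; exact iterate_of_ge_depth h (by omega)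
    subst hr
    rw [h.depth_root, Nat.sub_zero]
    exact iterate_depth_root h v

lemma anc_comparable (h : IsRootedTree p r dp) {u w x : V} (h1 : Anc p u x) (h2 : Anc p w x) :
    Anc p u w ∨ Anc p w u := by
  obtain ⟨n, hn⟩ := h1; obtain ⟨m, hm⟩ := h2
  rcases le_total n m with hle | hle
  · right
    refine ⟨m - n, ?_⟩
    rw [← hn, ← Function.iterate_add_apply, ← hm]
    congr 1; omega
  · left
    refine ⟨n - m, ?_⟩
    rw [← hm, ← Function.iterate_add_apply, ← hn]
    congr 1; omega

lemma tdist_comm (u v : V) : tdist p u v = tdist p v u := by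
  unfold tdist
  congr 1
  ext k
  constructor <;> rintro ⟨n, m, hnm, hI⟩ <;> exact ⟨m, n, by omega, hI.symm⟩

lemma tdist_anc (h : IsRootedTree p r dp) {u v : V} (huv : Anc p u v) :
    tdist p u v = dp v - dp u := by
  unfold tdist
  have hmem : (dp v - dp u) ∈ {k : ℕ | ∃ n m : ℕ, n + m = k ∧ p^[n] u = p^[m] v} :=
    ⟨0, dp v - dp u, by omega, (anc_iterate_eq h huv).symm⟩
  apply le_antisymm
  · exact Nat.sInf_le hmem
  · apply le_csInf ⟨_, hmem⟩
    rintro k ⟨n, m, hnm, hI⟩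
    have h1 : dp v ≤ dp (p^[m] v) + m := dp_iterate_ge h m v
    have h2 : dp (p^[n] u) ≤ dp u := dp_iterate_le h n u
    rw [hI] at h2
    omega

end TreeLemmas

section MedLemmas
/-- In a sorted list, if at least `k+1` elements are `≤ t`, then the `k`-th element is `≤ t`. -/
lemma sorted_getElem_le_of_countP {L : List ℝ} (hL : L.Pairwise (· ≤ ·)) {t : ℝ} {k : ℕ}
    (hk : k < L.length) (hc : k + 1 ≤ L.countP (fun x => decide (x ≤ t))) : L[k] ≤ t := by
  by_contra hlt
  push_neg at hlt
  have hsplit : L.countP (fun x => decide (x ≤ t)) =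
      (L.take k).countP (fun x => decide (x ≤ t)) + (L.drop k).countP (fun x => decide (x ≤ t)) := by
    conv_lhs => rw [← List.take_append_drop k L]
    rw [List.countP_append]
  have h1 : (L.take k).countP (fun x => decide (x ≤ t)) ≤ k := by
    calc (L.take k).countP _ ≤ (L.take k).length := List.countP_le_length
    _ ≤ k := by simp
  have h2 : (L.drop k).countP (fun x => decide (x ≤ t)) = 0 := by
    rw [List.countP_eq_zero]
    intro x hx
    simp only [decide_eq_true_eq]
    rw [List.mem_iff_getElem] at hx
    obtain ⟨j, hj, rfl⟩ := hx
    have hj' : k + j < L.length := by rw [List.length_drop] at hj; omega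
    rw [List.getElem_drop]
    have : L[k] ≤ L[k + j] := by
      rcases Nat.eq_zero_or_pos j with rfl | hj0
      · simp
      · have := hL.rel_get_of_lt (a := ⟨k, hk⟩)
          (b := ⟨k + j, by have := hj; rw [List.length_drop] at this; omega⟩) (by simp; omega)
        simpa using this
    push_neg
    linarith
  omega

/-- In a sorted list, the first `k+1` elements are `≤ L[k]`, so countP is at least `k+1`. -/
lemma sorted_countP_ge {L : List ℝ} (hL : L.Pairwise (· ≤ ·)) {k : ℕ} (hk : k < L.length) :
    k + 1 ≤ L.countP (fun x => decide (x ≤ L[k])) := by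
  generalize hgoal : L[k] = t
  have hsplit : L.countP (fun x => decide (x ≤ t)) =
      (L.take (k+1)).countP (fun x => decide (x ≤ t)) +
      (L.drop (k+1)).countP (fun x => decide (x ≤ t)) := by
    conv_lhs => rw [← List.take_append_drop (k+1) L]
    rw [List.countP_append]
  have h1 : (L.take (k+1)).countP (fun x => decide (x ≤ t)) = (L.take (k+1)).length := by
    rw [List.countP_eq_length]
    intro x hx
    simp only [decide_eq_true_eq]
    rw [List.mem_iff_getElem] at hx
    obtain ⟨j, hj, rfl⟩ := hx
    rw [List.getElem_take]
    have hjk : j ≤ k := by rw [List.length_take] at hj; omega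
    rw [← hgoal]
    rcases eq_or_lt_of_le hjk with rfl | hjk'
    · exact le_rfl
    · simpa using hL.rel_get_of_lt (a := ⟨j, by omega⟩) (b := ⟨k, hk⟩) (by simpa)
  have h2 : (L.take (k+1)).length = k + 1 := by simp; omega
  omega

lemma sort_coe_countP (s : Multiset ℝ) (t : ℝ) :
    (s.sort (· ≤ ·)).countP (fun x => decide (x ≤ t)) = Multiset.countP (· ≤ t) s := by
  rw [← Multiset.coe_countP, Multiset.sort_eq]

lemma sortedMap_getElem_mono {l : ℕ} (a b : Fin l → ℝ) (hab : ∀ i, a i ≤ b i) (k : ℕ)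
    (hka : k < ((Finset.univ.val.map a).sort (· ≤ ·)).length)
    (hkb : k < ((Finset.univ.val.map b).sort (· ≤ ·)).length) :
    ((Finset.univ.val.map a).sort (· ≤ ·))[k] ≤ ((Finset.univ.val.map b).sort (· ≤ ·))[k] := by
  set La := (Finset.univ.val.map a).sort (· ≤ ·) with hLa
  set Lb := (Finset.univ.val.map b).sort (· ≤ ·) with hLb
  set t := Lb[k] with ht
  have hc1 : k + 1 ≤ Lb.countP (fun x => decide (x ≤ t)) :=
    sorted_countP_ge (Multiset.pairwise_sort _ _) hkb
  have hc2 : Lb.countP (fun x => decide (x ≤ t)) ≤ La.countP (fun x => decide (x ≤ t)) := by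
    rw [hLa, hLb, sort_coe_countP, sort_coe_countP, Multiset.countP_map, Multiset.countP_map]
    apply Multiset.card_le_card
    apply Multiset.monotone_filter_right
    intro i hi
    exact le_trans (hab i) hi
  exact sorted_getElem_le_of_countP (Multiset.pairwise_sort _ _) hka (le_trans hc1 hc2)

lemma med_map_mono {l : ℕ} (hl : 1 ≤ l) (a b : Fin l → ℝ) (hab : ∀ i, a i ≤ b i) :
    med (Finset.univ.val.map a) ≤ med (Finset.univ.val.map b) := by
  have hca : (Finset.univ.val.map a).card = l := by simp
  have hcb : (Finset.univ.val.map b).card = l := by simp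
  have hla : ((Finset.univ.val.map a).sort (· ≤ ·)).length = l := by
    rw [Multiset.length_sort, hca]
  have hlb : ((Finset.univ.val.map b).sort (· ≤ ·)).length = l := by
    rw [Multiset.length_sort, hcb]
  have hk1 : l / 2 < l := Nat.div_lt_self (by omega) (by omega)
  have hk2 : l / 2 - 1 < l := by omega
  unfold med
  rw [hca, hcb]
  have e1 := sortedMap_getElem_mono a b hab (l / 2) (by omega) (by omega)
  have e2 := sortedMap_getElem_mono a b hab (l / 2 - 1) (by omega) (by omega)
  rw [List.getD_eq_getElem _ _ (by omega : l / 2 < ((Finset.univ.val.map a).sort (· ≤ ·)).length),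
    List.getD_eq_getElem _ _ (by omega : l / 2 < ((Finset.univ.val.map b).sort (· ≤ ·)).length)]
  by_cases hpar : l % 2 = 1
  · simp only [hpar, if_pos]
    exact e1
  · simp only [hpar, if_neg, if_false]
    rw [List.getD_eq_getElem _ _ (by omega : l / 2 - 1 < ((Finset.univ.val.map a).sort (· ≤ ·)).length),
      List.getD_eq_getElem _ _ (by omega : l / 2 - 1 < ((Finset.univ.val.map b).sort (· ≤ ·)).length)]
    linarith

lemma sort_map_mono (f : ℝ → ℝ) (hf : Monotone f) (s : Multiset ℝ) :
    (s.map f).sort (· ≤ ·) = ((s.sort (· ≤ ·)).map f) := by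
  refine (fun hp h1 h2 => List.Perm.eq_of_pairwise' (r := (· ≤ ·)) h1 h2 hp) ?_ ?_ ?_
  · apply Multiset.coe_eq_coe.mp
    rw [Multiset.sort_eq, ← Multiset.map_coe, Multiset.sort_eq]
  · exact Multiset.pairwise_sort _ _
  · exact List.Pairwise.map f (fun a b hab => hf hab) (Multiset.pairwise_sort _ _)

lemma med_shift (c : ℝ) (A : Multiset ℝ) (hA : 1 ≤ A.card) :
    med (A.map (fun x => c + x)) = c + med A := by
  have hc : (A.map (fun x => c + x)).card = A.card := by simp
  have hlen : ((A.sort (· ≤ ·))).length = A.card := by rw [Multiset.length_sort]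
  have hk1 : A.card / 2 < A.card := Nat.div_lt_self (by omega) (by omega)
  have hk2 : A.card / 2 - 1 < A.card := by omega
  have hsort : (A.map (fun x => c + x)).sort (· ≤ ·) = (A.sort (· ≤ ·)).map (fun x => c + x) :=
    sort_map_mono _ (fun x y h => by linarith) A
  unfold med
  rw [hc, hsort]
  have g1 : ((A.sort (· ≤ ·)).map (fun x => c + x)).getD (A.card / 2) 0
      = c + (A.sort (· ≤ ·)).getD (A.card / 2) 0 := by
    rw [List.getD_eq_getElem _ _ (by simp; omega), List.getD_eq_getElem _ _ (by omega),
      List.getElem_map]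
  have g2 : ((A.sort (· ≤ ·)).map (fun x => c + x)).getD (A.card / 2 - 1) 0
      = c + (A.sort (· ≤ ·)).getD (A.card / 2 - 1) 0 := by
    rw [List.getD_eq_getElem _ _ (by simp; omega), List.getD_eq_getElem _ _ (by omega),
      List.getElem_map]
  by_cases hpar : A.card % 2 = 1
  · simp only [hpar, if_pos, g1]
  · simp only [hpar, if_neg, if_false, g1, g2]
    ring


lemma zmed_eq (A : Multiset ℤ) : zmed A = round (med (A.map (Int.cast : ℤ → ℝ))) := by
  unfold zmed
  congr 1
  simp [Multiset.bind_singleton, Multiset.map_id']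

lemma zmed_shift {l : ℕ} (hl : 1 ≤ l) (c : ℤ) (g : Fin l → ℤ) :
    zmed (Finset.univ.val.map (fun i => c + g i)) = c + zmed (Finset.univ.val.map g) := by
  rw [zmed_eq, zmed_eq, Multiset.map_map, Multiset.map_map]
  have : ((Int.cast : ℤ → ℝ) ∘ fun i => c + g i) =
      (fun x => (c : ℝ) + x) ∘ ((Int.cast : ℤ → ℝ) ∘ g) := by
    funext i; simp only [Function.comp]; push_cast; ring
  rw [this, ← Multiset.map_map, med_shift _ _ (by simp; omega), round_intCast_add]

lemma zmed_map_mono {l : ℕ} (hl : 1 ≤ l) (a b : Fin l → ℤ) (hab : ∀ i, a i ≤ b i) :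
    zmed (Finset.univ.val.map a) ≤ zmed (Finset.univ.val.map b) := by
  rw [zmed_eq, zmed_eq, Multiset.map_map, Multiset.map_map]
  have h := med_map_mono hl (fun i => ((a i : ℤ) : ℝ)) (fun i => ((b i : ℤ) : ℝ))
    (fun i => by exact_mod_cast hab i)
  rw [round_eq, round_eq]
  exact Int.floor_mono (by exact add_le_add_left h _)

lemma zmed_const_zero {l : ℕ} (hl : 1 ≤ l) :
    zmed (Finset.univ.val.map (fun _ : Fin l => (0 : ℤ))) = 0 := by
  rw [zmed_eq, Multiset.map_map]
  have h1 : (Finset.univ.val.map ((Int.cast : ℤ → ℝ) ∘ fun _ : Fin l => (0:ℤ)))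
      = Multiset.replicate l (0 : ℝ) := by
    simp [Multiset.map_const']
  rw [h1]
  have hsort : (Multiset.replicate l (0:ℝ)).sort (· ≤ ·) = List.replicate l 0 := by
    refine (fun hp h1 h2 => List.Perm.eq_of_pairwise' (r := (· ≤ ·)) h1 h2 hp) ?_ ?_ ?_
    · apply Multiset.coe_eq_coe.mp
      rw [Multiset.sort_eq, Multiset.coe_replicate]
    · exact Multiset.pairwise_sort _ _
    · exact List.pairwise_replicate.mpr (by simp)
  have hg : ∀ k, (List.replicate l (0:ℝ)).getD k 0 = 0 := by
    intro k
    by_cases hk : k < l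
    · rw [List.getD_eq_getElem _ _ (by simpa), List.getElem_replicate]
    · exact List.getD_eq_default _ _ (by simp; omega)
  unfold med
  rw [hsort]
  simp only [Multiset.card_replicate, hg]
  by_cases hpar : l % 2 = 1 <;> simp [hpar]


end MedLemmas

section ReconLemmas
variable {VP VH : Type*} {pP : VP → VP} {pH : VH → VH} {rP : VP} {rH : VH}
  {dpP : VP → ℕ} {dpH : VH → ℕ} {φ ψ : VP → VH} {m : VP → VH}

lemma leaf_anc_eq {x y : VP} (hx : IsLeaf pP x) (h : Anc pP x y) : y = x := by
  obtain ⟨n, hn⟩ := h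
  induction n generalizing y with
  | zero => exact hn
  | succ k ih =>
    rw [Function.iterate_succ_apply] at hn
    have := ih hn
    exact hx y this

lemma recon_anc (hψ : IsRecon pP pH φ ψ) {u v : VP} (h : Anc pP u v) :
    Anc pH (ψ u) (ψ v) := by
  obtain ⟨n, rfl⟩ := h
  induction n with
  | zero => exact anc_refl _
  | succ k ih =>
    rw [Function.iterate_succ_apply']
    by_cases hfix : pP (pP^[k] v) = pP^[k] v
    · rw [hfix]; exact ih
    · have hstep : Anc pH (ψ (pP (pP^[k] v))) (ψ (pP^[k] v)) := by
        apply hψ.2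
        exact ⟨rfl, fun hcon => hfix hcon.symm⟩
      exact anc_trans hstep ih

lemma recon_anc_m (hm : ∀ v, IsLCA pH {h | ∃ x, IsLeaf pP x ∧ Anc pP v x ∧ φ x = h} (m v))
    (hψ : IsRecon pP pH φ ψ) (v : VP) : Anc pH (ψ v) (m v) := by
  apply (hm v).2
  rintro s ⟨x, hleaf, hanc, rfl⟩
  rw [← hψ.1 x hleaf]
  exact recon_anc hψ hanc

lemma m_child_anc (hm : ∀ v, IsLCA pH {h | ∃ x, IsLeaf pP x ∧ Anc pP v x ∧ φ x = h} (m v))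
    {v v' : VP} (hch : IsChild pP v' v) : Anc pH (m v) (m v') := by
  apply (hm v').2
  rintro s ⟨x, hx, hanc, rfl⟩
  apply (hm v).1
  exact ⟨x, hx, anc_trans ⟨1, by simp [hch.1]⟩ hanc, rfl⟩

lemma leaf_m (hH : IsRootedTree pH rH dpH)
    (hm : ∀ v, IsLCA pH {h | ∃ x, IsLeaf pP x ∧ Anc pP v x ∧ φ x = h} (m v))
    {x : VP} (hx : IsLeaf pP x) : m x = φ x := by
  have h1 : Anc pH (m x) (φ x) := (hm x).1 (φ x) ⟨x, hx, anc_refl x, rfl⟩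
  have h2 : Anc pH (φ x) (m x) := by
    apply (hm x).2
    rintro s ⟨y, _, hanc, rfl⟩
    rw [leaf_anc_eq hx hanc]
    exact anc_refl _
  exact anc_antisymm hH h1 h2

end ReconLemmas

theorem stmt12 {VP VH : Type*} (pP : VP → VP) (pH : VH → VH) (rP : VP) (rH : VH)
    (dpP : VP → ℕ) (dpH : VH → ℕ)
    (hP : IsRootedTree pP rP dpP) (hH : IsRootedTree pH rH dpH)
    (hbP : IsBinary pP) (hbH : IsBinary pH)
    (φ : VP → VH) (hφ : ∀ x, IsLeaf pP x → IsLeaf pH (φ x))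
    (m : VP → VH)
    (hm : ∀ v, IsLCA pH {h | ∃ x, IsLeaf pP x ∧ Anc pP v x ∧ φ x = h} (m v))
    (l : ℕ) (hl : 1 ≤ l) (Ψ : Fin l → VP → VH) (hΨ : ∀ i, IsRecon pP pH φ (Ψ i))
    (ψmed : VP → VH)
    (hmed : ∀ v, ψmed v ∈ ASet pH rH (m v) ∧
      (tdist pH (m v) (ψmed v) : ℤ) =
        zmed ((Finset.univ.val : Multiset (Fin l)).map
          (fun i => (tdist pH (m v) (Ψ i v) : ℤ)))) :
    IsRecon pP pH φ ψmed := by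
  constructor
  · -- leaves
    intro x hx
    obtain ⟨hA, hz⟩ := hmed x
    have hmx : m x = φ x := leaf_m hH hm hx
    have hzero : ∀ i, (tdist pH (m x) (Ψ i x) : ℤ) = (fun _ : Fin l => (0 : ℤ)) i := by
      intro i
      have hix : Ψ i x = φ x := (hΨ i).1 x hx
      rw [hix, ← hmx, tdist_anc hH (anc_refl (m x))]
      simp
    rw [Multiset.map_congr rfl (fun i _ => hzero i), zmed_const_zero hl] at hz
    have h1 : tdist pH (ψmed x) (m x) = dpH (m x) - dpH (ψmed x) := tdist_anc hH hA.2
    rw [tdist_comm] at hz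
    have h2 : dpH (m x) ≤ dpH (ψmed x) := by omega
    rw [anc_of_dp_le hH hA.2 h2, hmx]
  · -- interior
    intro v v' hch
    obtain ⟨hA, hz⟩ := hmed v
    obtain ⟨hA', hz'⟩ := hmed v'
    have hmm' : Anc pH (m v) (m v') := m_child_anc hm hch
    have hanc1 : Anc pH (ψmed v) (m v') := anc_trans hA.2 hmm'
    rcases anc_comparable hH hanc1 hA'.2 with h | h
    · exact h
    · -- both on chain over m v'; compare depths
      set cN : ℕ := tdist pH (m v) (m v') with hcN
      have hcNd : cN = dpH (m v') - dpH (m v) := tdist_anc hH hmm'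
      have hdmm : dpH (m v) ≤ dpH (m v') := anc_dp_le hH hmm'
      have hpt : ∀ i, (tdist pH (m v') (Ψ i v') : ℤ) ≤
          (fun i => (cN : ℤ) + (tdist pH (m v) (Ψ i v) : ℤ)) i := by
        intro i
        simp only []
        have ha1 : Anc pH (Ψ i v') (m v') := recon_anc_m hm (hΨ i) v'
        have ha2 : Anc pH (Ψ i v) (Ψ i v') := (hΨ i).2 v v' hch
        have ha3 : Anc pH (Ψ i v) (m v) := recon_anc_m hm (hΨ i) v
        have e1 : tdist pH (m v') (Ψ i v') = dpH (m v') - dpH (Ψ i v') := by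
          rw [tdist_comm]; exact tdist_anc hH ha1
        have e2 : tdist pH (m v) (Ψ i v) = dpH (m v) - dpH (Ψ i v) := by
          rw [tdist_comm]; exact tdist_anc hH ha3
        have d1 : dpH (Ψ i v') ≤ dpH (m v') := anc_dp_le hH ha1
        have d2 : dpH (Ψ i v) ≤ dpH (m v) := anc_dp_le hH ha3
        have d3 : dpH (Ψ i v) ≤ dpH (Ψ i v') := anc_dp_le hH ha2
        omega
      have hkey : (tdist pH (m v') (ψmed v') : ℤ) ≤ (cN : ℤ) + (tdist pH (m v) (ψmed v) : ℤ) := by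
        rw [hz, hz']
        calc zmed ((Finset.univ.val : Multiset (Fin l)).map
              (fun i => (tdist pH (m v') (Ψ i v') : ℤ)))
            ≤ zmed ((Finset.univ.val : Multiset (Fin l)).map
              (fun i => (cN : ℤ) + (tdist pH (m v) (Ψ i v) : ℤ))) := zmed_map_mono hl _ _ hpt
          _ = (cN : ℤ) + zmed ((Finset.univ.val : Multiset (Fin l)).map
              (fun i => (tdist pH (m v) (Ψ i v) : ℤ))) := zmed_shift hl _ _
      have e1 : tdist pH (m v') (ψmed v') = dpH (m v') - dpH (ψmed v') := by
        rw [tdist_comm]; exact tdist_anc hH hA'.2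
      have e2 : tdist pH (m v) (ψmed v) = dpH (m v) - dpH (ψmed v) := by
        rw [tdist_comm]; exact tdist_anc hH hA.2
      have d1 : dpH (ψmed v') ≤ dpH (m v') := anc_dp_le hH hA'.2
      have d2 : dpH (ψmed v) ≤ dpH (m v) := anc_dp_le hH hA.2
      have hdp : dpH (ψmed v) ≤ dpH (ψmed v') := by omega
      rw [anc_of_dp_le hH h hdp]
      exact anc_refl _


end Recon
end

section
/- Given reconciliation maps ψ_1,…,ψ_l for (P,H,φ) (l ≥ 1), the map ψ_min defined by letting ψ_min(v) be the lowest (with respect to ⪰_H) element of {ψ_1(v),…,ψ_l(v)} is well-defined and is itself a reconciliation map for (P,H,φ). -/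
open Classical

namespace Recon

lemma anc_trans_s13 {V : Type*} (p : V → V) {a b c : V} (h1 : Anc p a b) (h2 : Anc p b c) :
    Anc p a c := by
  obtain ⟨n, hn⟩ := h1; obtain ⟨m, hm⟩ := h2
  exact ⟨n + m, by rw [Function.iterate_add_apply, hm, hn]⟩

theorem stmt13 {VP VH : Type*} (pP : VP → VP) (pH : VH → VH) (rP : VP) (rH : VH)
    (dpP : VP → ℕ) (dpH : VH → ℕ)
    (hP : IsRootedTree pP rP dpP) (hH : IsRootedTree pH rH dpH)
    (hbP : IsBinary pP) (hbH : IsBinary pH)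
    (φ : VP → VH) (hφ : ∀ x, IsLeaf pP x → IsLeaf pH (φ x))
    (m : VP → VH)
    (hm : ∀ v, IsLCA pH {h | ∃ x, IsLeaf pP x ∧ Anc pP v x ∧ φ x = h} (m v))
    (l : ℕ) (hl : 1 ≤ l) (Ψ : Fin l → VP → VH) (hΨ : ∀ i, IsRecon pP pH φ (Ψ i)) :
    ∃ ψmin : VP → VH,
      (∀ v, (∃ i, ψmin v = Ψ i v) ∧ ∀ i, Anc pH (Ψ i v) (ψmin v)) ∧
      IsRecon pP pH φ ψmin := by
  -- Each Ψ i v is an ancestor of φ x for every leaf x below v.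
  have aux : ∀ (i : Fin l) (x : VP), IsLeaf pP x → ∀ n : ℕ, Anc pH (Ψ i (pP^[n] x)) (φ x) := by
    intro i x hx n
    induction n with
    | zero => exact ⟨0, by simp [(hΨ i).1 x hx]⟩
    | succ n ih =>
        rw [Function.iterate_succ_apply']
        by_cases h : pP (pP^[n] x) = pP^[n] x
        · rw [h]; exact ih
        · exact anc_trans_s13 pH ((hΨ i).2 _ _ ⟨rfl, fun he => h he.symm⟩) ih
  -- Hence each Ψ i v is an ancestor of m v.
  have hanc : ∀ (i : Fin l) (v : VP), Anc pH (Ψ i v) (m v) := by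
    intro i v
    apply (hm v).2
    rintro h ⟨x, hx, ⟨n, hn⟩, rfl⟩
    have := aux i x hx n
    rwa [hn] at this
  -- Define ψmin via the least iterate of pH from m v hitting some Ψ i v.
  set S : VP → Set ℕ := fun v => {n | ∃ i, pH^[n] (m v) = Ψ i v} with hS
  have hne : ∀ v, (S v).Nonempty := by
    intro v
    obtain ⟨n, hn⟩ := hanc ⟨0, hl⟩ v
    exact ⟨n, ⟨0, hl⟩, hn⟩
  set N : VP → ℕ := fun v => sInf (S v) with hNdef
  have hN : ∀ v, N v ∈ S v := fun v => Nat.sInf_mem (hne v)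
  refine ⟨fun v => pH^[N v] (m v), ?_, ?_, ?_⟩
  · intro v
    refine ⟨hN v, ?_⟩
    intro i
    obtain ⟨n, hn⟩ := hanc i v
    have hmem : n ∈ S v := ⟨i, hn⟩
    have hle : N v ≤ n := Nat.sInf_le hmem
    exact ⟨n - N v, by rw [← Function.iterate_add_apply, Nat.sub_add_cancel hle, hn]⟩
  · intro x hx
    obtain ⟨i, hi⟩ := hN x
    show pH^[N x] (m x) = φ x
    rw [hi, (hΨ i).1 x hx]
  · intro v v' hc
    obtain ⟨i, hi⟩ := hN v
    show Anc pH (pH^[N v] (m v)) (pH^[N v'] (m v'))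
    rw [hi]
    refine anc_trans_s13 pH ((hΨ i).2 v v' hc) ?_
    obtain ⟨n, hn⟩ := hanc i v'
    have hle : N v' ≤ n := Nat.sInf_le ⟨i, hn⟩
    exact ⟨n - N v', by rw [← Function.iterate_add_apply, Nat.sub_add_cancel hle, hn]⟩

end Recon
end
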